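/- For the metric functions e^{λ(r)} = 1/(1 − r²/R²) and e^{ν(r)} = (C − D√(1 − r²/R²))² on (0, R), the complexity factor Y_TF(r) = e^{−λ(r)}·[ν'(r)(rλ'(r) − rν'(r) + 2) − 2rν''(r)]/(4r) is identically zero. -/

import Mathlib

open Real Set

private lemma u_pos' {R x : ℝ} (hR : 0 < R) (hx : 0 < x) (hxR : x < R) :
    0 < 1 - x ^ 2 / R ^ 2 := by
  have h1 : x ^ 2 < R ^ 2 := by nlinarith
  have h2 : x ^ 2 / R ^ 2 < 1 := (div_lt_one (by positivity)).mpr h1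
  linarith

private lemma hasDerivAt_s' {R x : ℝ} (hR : 0 < R) (hx : 0 < x) (hxR : x < R) :
    HasDerivAt (fun y => Real.sqrt (1 - y ^ 2 / R ^ 2))
      (-x / (R ^ 2 * Real.sqrt (1 - x ^ 2 / R ^ 2))) x := by
  have hu := u_pos' hR hx hxR
  have hs : 0 < Real.sqrt (1 - x ^ 2 / R ^ 2) := Real.sqrt_pos.mpr hu
  have hu' : HasDerivAt (fun y : ℝ => 1 - y ^ 2 / R ^ 2) (-(2 * x ^ 1 / R ^ 2)) x := by
    simpa using ((hasDerivAt_pow 2 x).div_const (R ^ 2)).const_sub 1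
  have h := (Real.hasDerivAt_sqrt hu.ne').comp x hu'
  refine h.congr_deriv ?_
  symm
  field_simp

private lemma hasDerivAt_w' {R C D x : ℝ} (hR : 0 < R) (hx : 0 < x) (hxR : x < R) :
    HasDerivAt (fun y => C - D * Real.sqrt (1 - y ^ 2 / R ^ 2))
      (D * x / (R ^ 2 * Real.sqrt (1 - x ^ 2 / R ^ 2))) x := by
  have h := ((hasDerivAt_s' hR hx hxR).const_mul D).const_sub C
  refine h.congr_deriv ?_
  symm
  ring

private lemma hasDerivAt_f' {R C D x : ℝ} (hR : 0 < R) (hx : 0 < x) (hxR : x < R)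
    (hw : C - D * Real.sqrt (1 - x ^ 2 / R ^ 2) ≠ 0) :
    HasDerivAt (fun y => Real.log ((C - D * Real.sqrt (1 - y ^ 2 / R ^ 2)) ^ 2))
      (2 * D * x / (R ^ 2 * Real.sqrt (1 - x ^ 2 / R ^ 2)
          * (C - D * Real.sqrt (1 - x ^ 2 / R ^ 2)))) x := by
  have hu := u_pos' hR hx hxR
  have hs : 0 < Real.sqrt (1 - x ^ 2 / R ^ 2) := Real.sqrt_pos.mpr hu
  have hw2 : (C - D * Real.sqrt (1 - x ^ 2 / R ^ 2)) ^ 2 ≠ 0 := pow_ne_zero 2 hw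
  have hp := (hasDerivAt_w' (C := C) (D := D) hR hx hxR).pow 2
  have h := (Real.hasDerivAt_log hw2).comp x hp
  refine h.congr_deriv ?_
  symm
  set s := Real.sqrt (1 - x ^ 2 / R ^ 2) with hs_def
  have hR0 : (R:ℝ) ≠ 0 := hR.ne'
  field_simp [hs.ne']
  ring

private lemma hasDerivAt_g' {R x : ℝ} (hR : 0 < R) (hx : 0 < x) (hxR : x < R) :
    HasDerivAt (fun y => Real.log (1 / (1 - y ^ 2 / R ^ 2)))
      (2 * x / (R ^ 2 * Real.sqrt (1 - x ^ 2 / R ^ 2) ^ 2)) x := by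
  have hu := u_pos' hR hx hxR
  have hs2 : Real.sqrt (1 - x ^ 2 / R ^ 2) ^ 2 = 1 - x ^ 2 / R ^ 2 := Real.sq_sqrt hu.le
  have hu' : HasDerivAt (fun y : ℝ => 1 - y ^ 2 / R ^ 2) (-(2 * x ^ 1 / R ^ 2)) x := by
    simpa using ((hasDerivAt_pow 2 x).div_const (R ^ 2)).const_sub 1
  have hinv := (hasDerivAt_const x (1 : ℝ)).div hu' hu.ne'
  have hne : (1 : ℝ) / (1 - x ^ 2 / R ^ 2) ≠ 0 := one_div_ne_zero hu.ne'
  have h := (Real.hasDerivAt_log hne).comp x hinv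
  refine h.congr_deriv ?_
  symm
  rw [hs2]
  have hR0 : (R:ℝ) ≠ 0 := hR.ne'
  have h3 : (-x ^ 2 + R ^ 2 : ℝ) ≠ 0 := by nlinarith
  field_simp [hu.ne']
  have h4 : (R ^ 2 - x ^ 2 : ℝ) ≠ 0 := by nlinarith
  field_simp
  ring

theorem schwarzschild_interior_complexity_factor_zero
    (R C D : ℝ) (hR : 0 < R) :
    ∀ r : ℝ, 0 < r → r < R →
      C - D * Real.sqrt (1 - r ^ 2 / R ^ 2) ≠ 0 →
      (fun (f g : ℝ → ℝ) =>
        Real.exp (-(g r))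
          * (deriv f r * (r * deriv g r - r * deriv f r + 2)
              - 2 * r * deriv (deriv f) r) / (4 * r) = 0)
      (fun r => Real.log ((C - D * Real.sqrt (1 - r ^ 2 / R ^ 2)) ^ 2))
      (fun r => Real.log (1 / (1 - r ^ 2 / R ^ 2))) := by
  intro r hr hrR hw
  simp only
  have hu := u_pos' hR hr hrR
  have hs : 0 < Real.sqrt (1 - r ^ 2 / R ^ 2) := Real.sqrt_pos.mpr hu
  -- the open set on which everything is nice
  set S : Set ℝ := Ioo 0 R ∩ {x | C - D * Real.sqrt (1 - x ^ 2 / R ^ 2) ≠ 0} with hS_def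
  have hcont : Continuous fun x : ℝ => C - D * Real.sqrt (1 - x ^ 2 / R ^ 2) := by
    continuity
  have hSopen : IsOpen S :=
    isOpen_Ioo.inter (isOpen_compl_singleton.preimage hcont)
  have hrS : r ∈ S := ⟨⟨hr, hrR⟩, hw⟩
  -- first derivative function
  set F : ℝ → ℝ := fun x => 2 * D * x / (R ^ 2 * Real.sqrt (1 - x ^ 2 / R ^ 2)
      * (C - D * Real.sqrt (1 - x ^ 2 / R ^ 2))) with hF_def
  have hev : (deriv fun y => Real.log ((C - D * Real.sqrt (1 - y ^ 2 / R ^ 2)) ^ 2))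
      =ᶠ[nhds r] F := by
    filter_upwards [hSopen.mem_nhds hrS] with x hx
    exact (hasDerivAt_f' hR hx.1.1 hx.1.2 hx.2).deriv
  -- derivative of F at r
  have hQne : R ^ 2 * Real.sqrt (1 - r ^ 2 / R ^ 2)
      * (C - D * Real.sqrt (1 - r ^ 2 / R ^ 2)) ≠ 0 := by
    apply mul_ne_zero (mul_ne_zero (by positivity) hs.ne') hw
  have hnum : HasDerivAt (fun y : ℝ => 2 * D * y) (2 * D) r := by
    simpa using (hasDerivAt_id r).const_mul (2 * D)
  have hden : HasDerivAt (fun y => R ^ 2 * Real.sqrt (1 - y ^ 2 / R ^ 2)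
      * (C - D * Real.sqrt (1 - y ^ 2 / R ^ 2)))
      (R ^ 2 * (-r / (R ^ 2 * Real.sqrt (1 - r ^ 2 / R ^ 2)))
          * (C - D * Real.sqrt (1 - r ^ 2 / R ^ 2))
        + R ^ 2 * Real.sqrt (1 - r ^ 2 / R ^ 2)
          * (D * r / (R ^ 2 * Real.sqrt (1 - r ^ 2 / R ^ 2)))) r :=
    (((hasDerivAt_s' hR hr hrR).const_mul (R ^ 2)).mul (hasDerivAt_w' hR hr hrR))
  have hF : HasDerivAt F _ r := hnum.div hden hQne
  have hddf : (deriv (deriv fun y =>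
      Real.log ((C - D * Real.sqrt (1 - y ^ 2 / R ^ 2)) ^ 2))) r = _ :=
    hev.deriv_eq.trans hF.deriv
  rw [(hasDerivAt_f' hR hr hrR hw).deriv, (hasDerivAt_g' hR hr hrR).deriv, hddf]
  rw [div_eq_zero_iff]
  left
  rw [mul_eq_zero]
  right
  set s := Real.sqrt (1 - r ^ 2 / R ^ 2) with hs_def
  have hR0 : (R:ℝ) ≠ 0 := hR.ne'
  field_simp [hs.ne', hw]
  ring
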